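/- If a partial order P has a linear extension L containing no alternating 4-anticycle, then there exists an interval order P_I on the same ground set with P = L ∩ P_I. -/
import Mathlib


variable {V : Type*}

/-- A strict partial order: irreflexive and transitive. -/
def IsPartialOrd (P : V → V → Prop) : Prop := Irreflexive P ∧ Transitive P

/-- A strict linear order: irreflexive, transitive, and total. -/
def IsLinearOrd (L : V → V → Prop) : Prop :=
  Irreflexive L ∧ Transitive L ∧ ∀ u v : V, u ≠ v → L u v ∨ L v u

/-- `L` is a linear extension of `P`. -/
def IsLinExt (P L : V → V → Prop) : Prop :=
  IsLinearOrd L ∧ ∀ u v : V, P u v → L u v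

/-- Four distinct elements `a0, b0, a1, b1` form a suborder `2+2` of `P`:
their only `P`-relations are `a0 ≺ b0` and `a1 ≺ b1`. -/
def IsTwoPlusTwo (P : V → V → Prop) (a0 b0 a1 b1 : V) : Prop :=
  ([a0, b0, a1, b1] : List V).Nodup ∧ P a0 b0 ∧ P a1 b1 ∧
  ¬ P b0 a0 ∧ ¬ P b1 a1 ∧
  ¬ P a0 a1 ∧ ¬ P a1 a0 ∧ ¬ P a0 b1 ∧ ¬ P b1 a0 ∧
  ¬ P a1 b0 ∧ ¬ P b0 a1 ∧ ¬ P b0 b1 ∧ ¬ P b1 b0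

/-- The linear extension `L` of `P` fulfills the `2+2` rule. -/
def TwoPlusTwoRule (P L : V → V → Prop) : Prop :=
  ∀ a0 b0 a1 b1 : V, IsTwoPlusTwo P a0 b0 a1 b1 → L b0 a1 ∨ L b1 a0

/-- Four distinct elements form an alternating 4-anticycle of `L` w.r.t. `P`. -/
def IsAlt4Anticycle (P L : V → V → Prop) (a0 b0 a1 b1 : V) : Prop :=
  ([a0, b0, a1, b1] : List V).Nodup ∧ P a0 b0 ∧ P a1 b1 ∧
  L a1 b0 ∧ ¬ P a1 b0 ∧ L a0 b1 ∧ ¬ P a0 b1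

/-- An alternating `2k`-anticycle of `L` w.r.t. `P`, given by `a, b : ZMod k → V`. -/
def IsAltAnticycle (P L : V → V → Prop) (k : ℕ) (a b : ZMod k → V) : Prop :=
  Function.Injective a ∧ Function.Injective b ∧ (∀ i j : ZMod k, a i ≠ b j) ∧
  ∀ i : ZMod k, P (a i) (b i) ∧ L (a (i + 1)) (b i) ∧ ¬ P (a (i + 1)) (b i)

/-- `P` is a linear-interval order: the intersection of a linear order and an
interval order (given by an interval representation `l`, `r`). -/
def IsLinearIntervalOrder (P : V → V → Prop) : Prop :=
  ∃ (L : V → V → Prop) (l r : V → ℝ), IsLinearOrd L ∧ (∀ v, l v ≤ r v) ∧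
    ∀ u v : V, P u v ↔ L u v ∧ r u < l v


section Stmt4Aux

variable {V : Type*}

/-- Auxiliary relation: `Stmt4R P L u u'` says the right endpoint of `u` must be
strictly below the right endpoint of `u'` in any representation. -/
def Stmt4R (P L : V → V → Prop) (u u' : V) : Prop :=
  ∃ v, P u v ∧ ((L u' v ∧ ¬ P u' v) ∨ u' = v)

/-- Chains of length `n` for `Stmt4R`. -/
def Stmt4C (P L : V → V → Prop) : ℕ → V → V → Prop
  | 0, u, w => u = w
  | n + 1, u, w => ∃ x, Stmt4R P L u x ∧ Stmt4C P L n x w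

lemma Stmt4C_snoc {P L : V → V → Prop} :
    ∀ {n : ℕ} {u w x : V}, Stmt4C P L n u w → Stmt4R P L w x → Stmt4C P L (n + 1) u x := by
  intro n
  induction n with
  | zero =>
    intro u w x h hr
    simp only [Stmt4C] at h
    subst h
    exact ⟨x, hr, rfl⟩
  | succ n ih =>
    intro u w x h hr
    obtain ⟨y, h1, h2⟩ := h
    exact ⟨y, h1, ih h2 hr⟩

lemma Stmt4C_unsnoc {P L : V → V → Prop} :
    ∀ {n : ℕ} {u w : V}, Stmt4C P L (n + 1) u w →
      ∃ y, Stmt4C P L n u y ∧ Stmt4R P L y w := by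
  intro n
  induction n with
  | zero =>
    intro u w h
    obtain ⟨x, hr, hx⟩ := h
    simp only [Stmt4C] at hx
    subst hx
    exact ⟨u, rfl, hr⟩
  | succ n ih =>
    intro u w h
    obtain ⟨x, hr, hc⟩ := h
    obtain ⟨y, hcy, hry⟩ := ih hc
    exact ⟨y, ⟨x, hr, hcy⟩, hry⟩

lemma stmt4_transGen_chain {P L : V → V → Prop} {u v : V}
    (h : Relation.TransGen (Stmt4R P L) u v) :
    ∃ n, 1 ≤ n ∧ Stmt4C P L n u v := by
  induction h with
  | single h => exact ⟨1, le_refl 1, ⟨_, h, rfl⟩⟩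
  | tail h1 h2 ih =>
    obtain ⟨n, hn, hc⟩ := ih
    exact ⟨n + 1, by omega, Stmt4C_snoc hc h2⟩

/-- From six relational facts we can always build a genuine 4-anticycle. -/
lemma stmt4_helper {P L : V → V → Prop} (hP : IsPartialOrd P) (hL : IsLinExt P L)
    (h4 : ∀ a0 b0 a1 b1 : V, ¬ IsAlt4Anticycle P L a0 b0 a1 b1)
    {a0 b0 a1 b1 : V} (h1 : P a0 b0) (h2 : P a1 b1) (h3 : L a1 b0) (h4' : ¬ P a1 b0)
    (h5 : L a0 b1) (h6 : ¬ P a0 b1) : False := by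
  have hPI := hP.1
  have hLI := hL.1.1
  apply h4 a0 b0 a1 b1
  refine ⟨?_, h1, h2, h3, h4', h5, h6⟩
  have ne1 : a0 ≠ b0 := by rintro rfl; exact hPI _ h1
  have ne2 : a1 ≠ b1 := by rintro rfl; exact hPI _ h2
  have ne3 : a0 ≠ a1 := by rintro rfl; exact h4' h1
  have ne4 : b0 ≠ b1 := by rintro rfl; exact h4' h2
  have ne5 : a0 ≠ b1 := by rintro rfl; exact hLI _ h5
  have ne6 : a1 ≠ b0 := by rintro rfl; exact hLI _ h3
  simp [List.nodup_cons, ne1, ne2, ne3, ne4, ne5, ne6, ne6.symm]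

/-- Key combinatorial lemma: `Stmt4R` has no cycles. -/
lemma stmt4_noCycle {P L : V → V → Prop} (hP : IsPartialOrd P) (hL : IsLinExt P L)
    (h4 : ∀ a0 b0 a1 b1 : V, ¬ IsAlt4Anticycle P L a0 b0 a1 b1) :
    ∀ n : ℕ, 1 ≤ n → ∀ u : V, ¬ Stmt4C P L n u u := by
  have hPIr := hP.1
  have hPT := hP.2
  have hLI : Irreflexive L := hL.1.1
  have hLT : Transitive L := hL.1.2.1
  have hLtot := hL.1.2.2
  have hExt := hL.2
  intro n
  induction n using Nat.strong_induction_on with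
  | _ n IH =>
    intro hn u0 hc
    cases n with
    | zero => omega
    | succ n' =>
      cases n' with
      | zero =>
        -- cycle of length 1
        simp only [Stmt4C] at hc
        obtain ⟨x, hr, hx⟩ := hc
        subst hx
        obtain ⟨v, hPv, hlink⟩ := hr
        rcases hlink with ⟨_, hnp⟩ | heq
        · exact hnp hPv
        · subst heq; exact hPIr _ hPv
      | succ k =>
        -- n = k + 2
        obtain ⟨u1, hr01, u2, hr12, hc2⟩ := hc
        obtain ⟨v0, hPv0, hlink0⟩ := hr01
        obtain ⟨v1, hPv1, hlink1⟩ := hr12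
        rcases hlink0 with ⟨hL10, hnP10⟩ | heq0
        · -- genuine L-link from v0 to u1
          by_cases hP01 : P u0 v1
          · exact IH (k + 1) (by omega) (by omega) u0 ⟨u2, ⟨v1, hP01, hlink1⟩, hc2⟩
          · rcases eq_or_ne u0 v1 with heq | hne
            · subst heq
              exact hnP10 (hPT hPv1 hPv0)
            · rcases hLtot u0 v1 hne with hL01 | hL10'
              · exact stmt4_helper hP hL h4 hPv0 hPv1 hL10 hnP10 hL01 hP01
              · -- hL10' : L v1 u0
                have hLu1u0 : L u1 u0 := hLT (hExt _ _ hPv1) hL10'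
                have hnPu1u0 : ¬ P u1 u0 := fun h => hnP10 (hPT h hPv0)
                cases k with
                | zero =>
                  simp only [Stmt4C] at hc2
                  rw [hc2] at hlink1
                  rcases hlink1 with ⟨hLa, _⟩ | heq2
                  · exact hLI u0 (hLT hLa hL10')
                  · exact hne heq2
                | succ m =>
                  obtain ⟨y, hcy, v', hPyv', hlink'⟩ := Stmt4C_unsnoc hc2
                  have hRy1 : Stmt4R P L y u1 := by
                    rcases hlink' with ⟨hLu0v', hnPu0v'⟩ | heq'
                    · by_cases hPu1v' : P u1 v'
                      · exact (stmt4_helper hP hL h4 hPv0 hPu1v' hL10 hnP10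
                          hLu0v' hnPu0v').elim
                      · exact ⟨v', hPyv', Or.inl ⟨hLT hLu1u0 hLu0v', hPu1v'⟩⟩
                    · subst heq'
                      exact ⟨u0, hPyv', Or.inl ⟨hLu1u0, hnPu1u0⟩⟩
                  exact IH (m + 2) (by omega) (by omega) u1
                    ⟨u2, ⟨v1, hPv1, hlink1⟩, Stmt4C_snoc hcy hRy1⟩
        · -- u1 = v0
          subst heq0
          have hP0v1 : P u0 v1 := hPT hPv0 hPv1
          exact IH (k + 1) (by omega) (by omega) u0 ⟨u2, ⟨v1, hP0v1, hlink1⟩, hc2⟩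

end Stmt4Aux

theorem stmt4 {V : Type*} [Fintype V] (P L : V → V → Prop)
    (hP : IsPartialOrd P) (hL : IsLinExt P L)
    (h4 : ∀ a0 b0 a1 b1 : V, ¬ IsAlt4Anticycle P L a0 b0 a1 b1) :
    ∃ l r : V → ℝ, (∀ v, l v ≤ r v) ∧
      ∀ u v : V, P u v ↔ L u v ∧ r u < l v := by
  classical
  have hTirr : ∀ u : V, ¬ Relation.TransGen (Stmt4R P L) u u := by
    intro u h
    obtain ⟨n, hn, hc⟩ := stmt4_transGen_chain h
    exact stmt4_noCycle hP hL h4 n hn u hc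
  let q : V → ℕ := fun v => (Finset.univ.filter fun w => Relation.TransGen (Stmt4R P L) w v).card
  have hq : ∀ u v : V, Stmt4R P L u v → q u < q v := by
    intro u v hr
    apply Finset.card_lt_card
    have hsub : (Finset.univ.filter fun w => Relation.TransGen (Stmt4R P L) w u) ⊆
        (Finset.univ.filter fun w => Relation.TransGen (Stmt4R P L) w v) := by
      intro w hw
      rw [Finset.mem_filter] at hw ⊢
      exact ⟨hw.1, hw.2.tail hr⟩
    rw [Finset.ssubset_iff_of_subset hsub]
    refine ⟨u, Finset.mem_filter.2 ⟨Finset.mem_univ u, Relation.TransGen.single hr⟩, ?_⟩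
    intro hmem
    exact hTirr u (Finset.mem_filter.1 hmem).2
  let S : V → Finset V := fun v => Finset.univ.filter fun u => (L u v ∧ ¬ P u v) ∨ u = v
  have hSmem : ∀ v : V, v ∈ S v := fun v =>
    Finset.mem_filter.2 ⟨Finset.mem_univ v, Or.inr rfl⟩
  have hSne : ∀ v : V, (S v).Nonempty := fun v => ⟨v, hSmem v⟩
  let lq : V → ℕ := fun v => (S v).inf' (hSne v) q
  refine ⟨fun v => (lq v : ℝ), fun u => (q u : ℝ), ?_, ?_⟩
  · intro v
    show (lq v : ℝ) ≤ (q v : ℝ)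
    exact_mod_cast Finset.inf'_le q (hSmem v)
  · intro u v
    constructor
    · intro hpuv
      refine ⟨hL.2 u v hpuv, ?_⟩
      have hlt : q u < lq v := by
        rw [Finset.lt_inf'_iff]
        intro b hb
        exact hq u b ⟨v, hpuv, (Finset.mem_filter.1 hb).2⟩
      show (q u : ℝ) < (lq v : ℝ)
      exact_mod_cast hlt
    · rintro ⟨hLuv, hlt⟩
      simp only at hlt
      by_contra hnp
      have hub : u ∈ S v := Finset.mem_filter.2 ⟨Finset.mem_univ u, Or.inl ⟨hLuv, hnp⟩⟩
      have hle : lq v ≤ q u := Finset.inf'_le q hub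
      have : (lq v : ℝ) ≤ (q u : ℝ) := by exact_mod_cast hle
      linarith
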